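/- Let I ⊂ ℝ be a compact interval and let f, λ : I → ℝ be C² functions with 0 < c₁ ≤ |f''(x)| ≤ c₂ for all x ∈ I. Then there exist constants C > 0 and T > 0, depending only on c₁, c₂ and sup_{x∈I}|λ''(x)|, with the following property. Let (a₁, a₂) ∈ ℤ² with |a₂| ≥ T, set 𝓕(x) := a₂ f(x) + a₁ x + λ(x), suppose x₀ ∈ I satisfies 𝓕'(x₀) = 0, and let a₀' ∈ ℤ satisfy |𝓕(x₀) + a₀'| ≤ 1/2. Let a₀ ∈ ℤ with a₀ ≠ a₀' and let 0 < η ≤ 1/4. Then the Lebesgue measure of the set {x ∈ I : |𝓕(x) + a₀| < η} is at most C·η / √(|a₂|·|a₀ − a₀'|). -/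

import Mathlib

open MeasureTheory Set


lemma mono_aux {a b : ℝ} (g g' : ℝ → ℝ)
    (hg : ∀ x, HasDerivAt g (g' x) x) (h : ∀ x ∈ Ioo a b, 0 ≤ g' x) :
    MonotoneOn g (Icc a b) := by
  apply monotoneOn_of_deriv_nonneg (convex_Icc a b)
    (fun x _ => (hg x).continuousAt.continuousWithinAt)
    (fun x _ => ((hg x).differentiableAt).differentiableWithinAt)
  intro x hx
  rw [interior_Icc] at hx
  rw [(hg x).deriv]
  exact h x hx

lemma anti_aux {a b : ℝ} (g g' : ℝ → ℝ)
    (hg : ∀ x, HasDerivAt g (g' x) x) (h : ∀ x ∈ Ioo a b, g' x ≤ 0) :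
    AntitoneOn g (Icc a b) := by
  apply antitoneOn_of_deriv_nonpos (convex_Icc a b)
    (fun x _ => (hg x).continuousAt.continuousWithinAt)
    (fun x _ => ((hg x).differentiableAt).differentiableWithinAt)
  intro x hx
  rw [interior_Icc] at hx
  rw [(hg x).deriv]
  exact h x hx

lemma interval_bound' (L : ℝ) (hL : 0 ≤ L) (S : Set ℝ)
    (h : ∀ x ∈ S, ∀ y ∈ S, x ≤ y → y - x ≤ L) :
    volume S ≤ ENNReal.ofReal (2 * L) := by
  rcases S.eq_empty_or_nonempty with rfl | ⟨u, hu⟩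
  · simp
  · have hsub : S ⊆ Icc (u - L) (u + L) := by
      intro x hx
      rcases le_total x u with hxu | hxu
      · have := h x hx u hu hxu
        exact ⟨by linarith, by linarith⟩
      · have := h u hu x hx hxu
        exact ⟨by linarith, by linarith⟩
    calc volume S ≤ volume (Icc (u - L) (u + L)) := measure_mono hsub
      _ = ENNReal.ofReal (2 * L) := by rw [Real.volume_Icc]; ring_nf

lemma aux_convex (a b : ℝ) (G G' G'' : ℝ → ℝ)
    (hG : ∀ x, HasDerivAt G (G' x) x) (hG' : ∀ x, HasDerivAt G' (G'' x) x)
    (m M : ℝ) (hm : 0 < m)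
    (hbd : ∀ x ∈ Icc a b, m ≤ G'' x ∧ G'' x ≤ M)
    (x₀ : ℝ) (hx₀ : x₀ ∈ Icc a b) (hG'x₀ : G' x₀ = 0)
    (c ρ η : ℝ) (hρ : 0 < ρ) (hη : 0 < η) (hηρ : η ≤ ρ)
    (hfar : 2 * ρ ≤ |G x₀ - c|) :
    volume {x ∈ Icc a b | |G x - c| < η} ≤
      ENNReal.ofReal (8 * η / (m * Real.sqrt (2 * ρ / M))) := by
  have hM : 0 < M := lt_of_lt_of_le hm ((hbd x₀ hx₀).1.trans (hbd x₀ hx₀).2)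
  set δ := Real.sqrt (2 * ρ / M) with hδdef
  have hδpos : 0 < δ := Real.sqrt_pos.mpr (by positivity)
  have hδsq : δ ^ 2 = 2 * ρ / M := Real.sq_sqrt (by positivity)
  have ha : a ≤ x₀ := hx₀.1
  have hb : x₀ ≤ b := hx₀.2
  -- monotonicity of G' - m t
  have hmono : MonotoneOn (fun t => G' t - m * t) (Icc a b) := by
    apply mono_aux _ (fun t => G'' t - m)
      (fun x => by simpa using (hG' x).fun_sub ((hasDerivAt_id x).const_mul m))
    intro x hx
    exact sub_nonneg.mpr (hbd x (Ioo_subset_Icc_self hx)).1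
  have hMmono : MonotoneOn (fun t => M * t - G' t) (Icc a b) := by
    apply mono_aux _ (fun t => M - G'' t)
      (fun x => by simpa using ((hasDerivAt_id x).const_mul M).fun_sub (hG' x))
    intro x hx
    exact sub_nonneg.mpr (hbd x (Ioo_subset_Icc_self hx)).2
  have claim1 : ∀ x ∈ Icc a b, x₀ ≤ x → m * (x - x₀) ≤ G' x := by
    intro x hx hxx
    have := hmono hx₀ hx hxx
    simp only [hG'x₀] at this
    nlinarith [this]
  have claim2 : ∀ x ∈ Icc a b, x ≤ x₀ → G' x ≤ m * (x - x₀) := by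
    intro x hx hxx
    have := hmono hx hx₀ hxx
    simp only [hG'x₀] at this
    nlinarith [this]
  have claimU1 : ∀ x ∈ Icc a b, x₀ ≤ x → G' x ≤ M * (x - x₀) := by
    intro x hx hxx
    have := hMmono hx₀ hx hxx
    simp only [hG'x₀] at this
    nlinarith [this]
  have claimU2 : ∀ x ∈ Icc a b, x ≤ x₀ → M * (x - x₀) ≤ G' x := by
    intro x hx hxx
    have := hMmono hx hx₀ hxx
    simp only [hG'x₀] at this
    nlinarith [this]
  -- Taylor-type upper bound
  have hqd : ∀ x : ℝ, HasDerivAt (fun t => M / 2 * (t - x₀) ^ 2 - G t)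
      (M * (x - x₀) - G' x) x := by
    intro x
    have h1 : HasDerivAt (fun t => M / 2 * (t - x₀) ^ 2)
        (M / 2 * (2 * (x - x₀) ^ 1 * 1)) x :=
      (((hasDerivAt_id x).sub_const x₀).pow 2).const_mul (M / 2)
    have := h1.fun_sub (hG x)
    rw [show M * (x - x₀) - G' x = M / 2 * (2 * (x - x₀) ^ 1 * 1) - G' x by ring]
    exact this
  have claimG : ∀ x ∈ Icc a b, G x - G x₀ ≤ M / 2 * (x - x₀) ^ 2 := by
    intro x hx
    rcases le_total x₀ x with hc | hc
    · have hq : MonotoneOn (fun t => M / 2 * (t - x₀) ^ 2 - G t) (Icc x₀ b) := by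
        apply mono_aux _ (fun t => M * (t - x₀) - G' t) hqd
        intro t ht
        have ht' : t ∈ Icc a b := ⟨by linarith [ht.1], le_of_lt ht.2⟩
        have := claimU1 t ht' (le_of_lt ht.1)
        linarith
      have := hq (left_mem_Icc.mpr hb) ⟨hc, hx.2⟩ hc
      simp at this
      nlinarith [this]
    · have hq : AntitoneOn (fun t => M / 2 * (t - x₀) ^ 2 - G t) (Icc a x₀) := by
        apply anti_aux _ (fun t => M * (t - x₀) - G' t) hqd
        intro t ht
        have ht' : t ∈ Icc a b := ⟨le_of_lt ht.1, by linarith [ht.2]⟩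
        have := claimU2 t ht' (le_of_lt ht.2)
        linarith
      have := hq ⟨hx.1, hc⟩ (right_mem_Icc.mpr ha) hc
      simp at this
      nlinarith [this]
  -- x₀ is a global min
  have claimPos : ∀ x ∈ Icc a b, G x₀ ≤ G x := by
    intro x hx
    rcases le_total x₀ x with hc | hc
    · have hq : MonotoneOn G (Icc x₀ b) := by
        apply mono_aux _ G' hG
        intro t ht
        have ht' : t ∈ Icc a b := ⟨by linarith [ht.1], le_of_lt ht.2⟩
        have := claim1 t ht' (le_of_lt ht.1)
        nlinarith [ht.1]
      exact hq (left_mem_Icc.mpr hb) ⟨hc, hx.2⟩ hc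
    · have hq : AntitoneOn G (Icc a x₀) := by
        apply anti_aux _ G' hG
        intro t ht
        have ht' : t ∈ Icc a b := ⟨le_of_lt ht.1, by linarith [ht.2]⟩
        have := claim2 t ht' (le_of_lt ht.2)
        nlinarith [ht.2]
      exact hq ⟨hx.1, hc⟩ (right_mem_Icc.mpr ha) hc
  set S := {x ∈ Icc a b | |G x - c| < η} with hSdef
  have hkey : ∀ x ∈ S, δ ≤ |x - x₀| := by
    rintro x ⟨hx, hxn⟩
    have h0 : G x₀ ≤ G x := claimPos x hx
    have h1 : |G x₀ - c| - |G x - c| ≤ |(G x₀ - c) - (G x - c)| := abs_sub_abs_le_abs_sub _ _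
    have h2 : |(G x₀ - c) - (G x - c)| = G x - G x₀ := by
      rw [show (G x₀ - c) - (G x - c) = -(G x - G x₀) by ring, abs_neg,
        abs_of_nonneg (by linarith)]
    have h3 : ρ ≤ G x - G x₀ := by
      rw [h2] at h1
      linarith
    have h4 : 2 * ρ / M ≤ (x - x₀) ^ 2 := by
      have := claimG x hx
      rw [div_le_iff₀ hM]
      nlinarith
    calc δ ≤ Real.sqrt ((x - x₀) ^ 2) := Real.sqrt_le_sqrt h4
      _ = |x - x₀| := Real.sqrt_sq_eq_abs _
  set L := 2 * η / (m * δ) with hLdef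
  have hL : 0 ≤ L := by positivity
  have hmδ : 0 < m * δ := by positivity
  -- right part
  have hr : volume (S ∩ Ici x₀) ≤ ENNReal.ofReal (2 * L) := by
    apply interval_bound' L hL
    rintro x ⟨hxS, hxr⟩ y ⟨hyS, hyr⟩ hxy
    have hxδ : x₀ + δ ≤ x := by
      have := hkey x hxS
      rw [abs_of_nonneg (by simpa using sub_nonneg.mpr (Set.mem_Ici.mp hxr))] at this
      linarith
    have hrm : MonotoneOn (fun t => G t - m * δ * t) (Icc (x₀ + δ) b) := by
      apply mono_aux _ (fun t => G' t - m * δ)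
        (fun x => by simpa using (hG x).fun_sub ((hasDerivAt_id x).const_mul (m * δ)))
      intro t ht
      have ht' : t ∈ Icc a b := ⟨by linarith [ht.1], le_of_lt ht.2⟩
      have h1 := claim1 t ht' (by linarith [ht.1])
      have h2 : m * δ ≤ m * (t - x₀) := by
        apply mul_le_mul_of_nonneg_left _ (le_of_lt hm)
        linarith [ht.1]
      linarith
    have hxI : x ∈ Icc (x₀ + δ) b := ⟨hxδ, hxS.1.2⟩
    have hyI : y ∈ Icc (x₀ + δ) b := ⟨by linarith, hyS.1.2⟩
    have hmm := hrm hxI hyI hxy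
    simp only at hmm
    have hbx : |G x - c| < η := hxS.2
    have hby : |G y - c| < η := hyS.2
    have h2η : G y - G x < 2 * η := by
      have := abs_lt.mp hbx
      have := abs_lt.mp hby
      linarith
    rw [hLdef, le_div_iff₀ hmδ]
    nlinarith
  -- left part
  have hl : volume (S ∩ Iic x₀) ≤ ENNReal.ofReal (2 * L) := by
    apply interval_bound' L hL
    rintro x ⟨hxS, hxr⟩ y ⟨hyS, hyr⟩ hxy
    have hyδ : y ≤ x₀ - δ := by
      have := hkey y hyS
      rw [abs_of_nonpos (by simpa using sub_nonpos.mpr (Set.mem_Iic.mp hyr))] at this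
      linarith
    have hrm : AntitoneOn (fun t => G t + m * δ * t) (Icc a (x₀ - δ)) := by
      apply anti_aux _ (fun t => G' t + m * δ)
        (fun x => by simpa using (hG x).fun_add ((hasDerivAt_id x).const_mul (m * δ)))
      intro t ht
      have ht' : t ∈ Icc a b := ⟨le_of_lt ht.1, by linarith [ht.2]⟩
      have h1 := claim2 t ht' (by linarith [ht.2])
      have h2 : m * (t - x₀) ≤ m * (-δ) := by
        apply mul_le_mul_of_nonneg_left _ (le_of_lt hm)
        linarith [ht.2]
      nlinarith
    have hxI : x ∈ Icc a (x₀ - δ) := ⟨hxS.1.1, by linarith⟩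
    have hyI : y ∈ Icc a (x₀ - δ) := ⟨hyS.1.1, hyδ⟩
    have hmm := hrm hxI hyI hxy
    simp only at hmm
    have hbx : |G x - c| < η := hxS.2
    have hby : |G y - c| < η := hyS.2
    have h2η : G x - G y < 2 * η := by
      have := abs_lt.mp hbx
      have := abs_lt.mp hby
      linarith
    rw [hLdef, le_div_iff₀ hmδ]
    nlinarith
  have hcover : S ⊆ (S ∩ Iic x₀) ∪ (S ∩ Ici x₀) := by
    intro x hx
    rcases le_total x x₀ with h | h
    · exact Or.inl ⟨hx, h⟩
    · exact Or.inr ⟨hx, h⟩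
  calc volume S ≤ volume ((S ∩ Iic x₀) ∪ (S ∩ Ici x₀)) := measure_mono hcover
    _ ≤ volume (S ∩ Iic x₀) + volume (S ∩ Ici x₀) := measure_union_le _ _
    _ ≤ ENNReal.ofReal (2 * L) + ENNReal.ofReal (2 * L) := add_le_add hl hr
    _ = ENNReal.ofReal (8 * η / (m * δ)) := by
        rw [← ENNReal.ofReal_add (by positivity) (by positivity)]
        congr 1
        rw [hLdef]
        ring

set_option maxHeartbeats 1000000 in
/-- **Measure estimate for Case IIa.** For `𝓕(x) = a₂f(x) + a₁x + λ(x)` with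
`|a₂|` large, `𝓕'(x₀) = 0`, `a₀' ∈ ℤ` nearest to `-𝓕(x₀)` and `a₀ ≠ a₀'`, the
set `{x ∈ I : |𝓕(x) + a₀| < η}` has Lebesgue measure
`≤ Cη/√(|a₂||a₀ - a₀'|)` for `0 < η ≤ 1/4`. -/

theorem case_IIa_measure_estimate
    (a b : ℝ) (hab : a ≤ b)
    (f lam : ℝ → ℝ) (hf : ContDiff ℝ 2 f) (hlam : ContDiff ℝ 2 lam)
    (c₁ c₂ : ℝ) (hc₁ : 0 < c₁)
    (hbound : ∀ x ∈ Icc a b, c₁ ≤ |deriv (deriv f) x| ∧ |deriv (deriv f) x| ≤ c₂) :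
    ∃ C > (0 : ℝ), ∃ T > (0 : ℝ),
      ∀ a₁ a₂ : ℤ, ∀ F : ℝ → ℝ,
        F = (fun x => (a₂ : ℝ) * f x + (a₁ : ℝ) * x + lam x) →
        T ≤ |(a₂ : ℝ)| →
        ∀ x₀ ∈ Icc a b, deriv F x₀ = 0 →
          ∀ a₀' : ℤ, |F x₀ + (a₀' : ℝ)| ≤ 1 / 2 →
            ∀ a₀ : ℤ, a₀ ≠ a₀' →
              ∀ η : ℝ, 0 < η → η ≤ 1 / 4 →
                volume {x ∈ Icc a b | |F x + (a₀ : ℝ)| < η} ≤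
                  ENNReal.ofReal (C * η / Real.sqrt (|(a₂ : ℝ)| * |(a₀ : ℝ) - (a₀' : ℝ)|)) := by
  have hf1 : ContDiff ℝ 1 (deriv f) := by
    have := (contDiff_succ_iff_deriv.mp
      (show ContDiff ℝ ((1:ℕ)+1) f from by exact_mod_cast hf)).2.2
    exact_mod_cast this
  have hlam1 : ContDiff ℝ 1 (deriv lam) := by
    have := (contDiff_succ_iff_deriv.mp
      (show ContDiff ℝ ((1:ℕ)+1) lam from by exact_mod_cast hlam)).2.2
    exact_mod_cast this
  have hdf : Differentiable ℝ f := hf.differentiable (by norm_num)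
  have hdlam : Differentiable ℝ lam := hlam.differentiable (by norm_num)
  have hdf' : Differentiable ℝ (deriv f) := hf1.differentiable one_ne_zero
  have hdlam' : Differentiable ℝ (deriv lam) := hlam1.differentiable one_ne_zero
  have hcf'' : Continuous (deriv (deriv f)) := hf1.continuous_deriv le_rfl
  have hclam'' : Continuous (deriv (deriv lam)) := hlam1.continuous_deriv le_rfl
  obtain ⟨S₀, hS₀⟩ := isCompact_Icc.exists_bound_of_continuousOn
    (s := Icc a b) hclam''.continuousOn
  set S := max S₀ 0 with hSdef
  have hS : ∀ x ∈ Icc a b, |deriv (deriv lam) x| ≤ S :=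
    fun x hx => le_trans (hS₀ x hx) (le_max_left _ _)
  have hS0 : 0 ≤ S := le_max_right _ _
  have haI : a ∈ Icc a b := left_mem_Icc.mpr hab
  have hc₁₂ : c₁ ≤ c₂ := (hbound a haI).1.trans (hbound a haI).2
  have hc₂ : 0 < c₂ := lt_of_lt_of_le hc₁ hc₁₂
  have hsc : 0 < Real.sqrt c₂ := Real.sqrt_pos.mpr hc₂
  -- sign constancy of f''
  have hsign : (∀ x ∈ Icc a b, c₁ ≤ deriv (deriv f) x) ∨
      (∀ x ∈ Icc a b, deriv (deriv f) x ≤ -c₁) := by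
    have hivt : ∀ x ∈ Icc a b, ∀ y ∈ Icc a b,
        deriv (deriv f) x < 0 → 0 < deriv (deriv f) y → False := by
      intro x hx y hy hxneg hypos
      have hsub : uIcc x y ⊆ Icc a b := by
        rw [uIcc_eq_union]
        exact union_subset (Icc_subset_Icc hx.1 hy.2) (Icc_subset_Icc hy.1 hx.2)
      have h0 : (0:ℝ) ∈ uIcc (deriv (deriv f) x) (deriv (deriv f) y) := by
        rw [mem_uIcc]
        exact Or.inl ⟨le_of_lt hxneg, le_of_lt hypos⟩
      obtain ⟨z, hz, hz0⟩ := intermediate_value_uIcc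
        (hcf''.continuousOn (s := uIcc x y)) h0
      have := (hbound z (hsub hz)).1
      rw [hz0] at this
      simp at this
      linarith
    rcases le_abs.mp (hbound a haI).1 with h | h
    · left
      intro x hx
      rcases le_abs.mp (hbound x hx).1 with h' | h'
      · exact h'
      · exact absurd (hivt x hx a haI (by linarith) (by linarith)) (fun h => h)
    · right
      intro x hx
      rcases le_abs.mp (hbound x hx).1 with h' | h'
      · exact absurd (hivt a haI x hx (by linarith) (by linarith)) (fun h => h)
      · linarith
  refine ⟨32 * Real.sqrt c₂ / c₁, by positivity, max 1 (2 * S / c₁),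
    lt_of_lt_of_le one_pos (le_max_left _ _), ?_⟩
  intro a₁ a₂ F hF hT x₀ hx₀ hdF0 a₀' ha₀' a₀ hne η hηpos hη4
  subst hF
  set A := |(a₂:ℝ)| with hAdef
  have hA1 : (1:ℝ) ≤ A := le_trans (le_max_left _ _) hT
  have hA0 : (0:ℝ) < A := by linarith
  have hSA : S ≤ A * c₁ / 2 := by
    have h := le_trans (le_max_right 1 (2*S/c₁)) hT
    rw [div_le_iff₀ hc₁] at h
    linarith
  set D := |(a₀:ℝ) - (a₀':ℝ)| with hDdef
  have hD1 : (1:ℝ) ≤ D := by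
    have h : a₀ - a₀' ≠ 0 := sub_ne_zero.mpr hne
    have h2 : (1:ℤ) ≤ |a₀ - a₀'| := Int.one_le_abs h
    have h3 : ((1:ℤ):ℝ) ≤ ((|a₀ - a₀'|:ℤ):ℝ) := Int.cast_le.mpr h2
    push_cast at h3
    simpa using h3
  have hD0 : (0:ℝ) < D := by linarith
  -- choose the sign
  obtain ⟨s, hs1, hss⟩ : ∃ s : ℝ, |s| = 1 ∧
      ∀ x ∈ Icc a b, A * c₁ ≤ s * ((a₂:ℝ) * deriv (deriv f) x) := by
    rcases hsign with hsgn | hsgn <;> rcases le_or_gt 0 ((a₂:ℝ)) with h2 | h2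
    · refine ⟨1, abs_one, fun x hx => ?_⟩
      rw [one_mul, hAdef, abs_of_nonneg h2]
      exact mul_le_mul_of_nonneg_left (hsgn x hx) h2
    · refine ⟨-1, (by norm_num : |(-1:ℝ)| = 1), fun x hx => ?_⟩
      rw [hAdef, abs_of_neg h2]
      nlinarith [mul_le_mul_of_nonneg_left (hsgn x hx) (neg_nonneg.mpr (le_of_lt h2))]
    · refine ⟨-1, (by norm_num : |(-1:ℝ)| = 1), fun x hx => ?_⟩
      rw [hAdef, abs_of_nonneg h2]
      nlinarith [mul_le_mul_of_nonneg_left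
        (show c₁ ≤ -deriv (deriv f) x by linarith [hsgn x hx]) h2]
    · refine ⟨1, abs_one, fun x hx => ?_⟩
      rw [hAdef, abs_of_neg h2]
      nlinarith [mul_le_mul_of_nonneg_left
        (show c₁ ≤ -deriv (deriv f) x by linarith [hsgn x hx]) (neg_nonneg.mpr (le_of_lt h2))]
  -- derivatives of F
  have hF'x : ∀ x, HasDerivAt (fun x => (a₂:ℝ) * f x + (a₁:ℝ) * x + lam x)
      ((a₂:ℝ) * deriv f x + a₁ + deriv lam x) x := by
    intro x
    have h1 := ((hdf x).hasDerivAt).const_mul (a₂:ℝ)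
    have h2 := (hasDerivAt_id x).const_mul (a₁:ℝ)
    have h3 := (hdlam x).hasDerivAt
    have := (h1.fun_add h2).fun_add h3
    simpa using this
  have hF''x : ∀ x, HasDerivAt (fun x => (a₂:ℝ) * deriv f x + (a₁:ℝ) + deriv lam x)
      ((a₂:ℝ) * deriv (deriv f) x + deriv (deriv lam) x) x := by
    intro x
    have h1 := ((hdf' x).hasDerivAt).const_mul (a₂:ℝ)
    have h3 := (hdlam' x).hasDerivAt
    simpa using (h1.add_const (a₁:ℝ)).fun_add h3
  have hdF0' : (a₂:ℝ) * deriv f x₀ + a₁ + deriv lam x₀ = 0 := by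
    rw [← (hF'x x₀).deriv]; exact hdF0
  -- set up for the convex lemma
  set G : ℝ → ℝ := fun x => s * ((a₂:ℝ) * f x + (a₁:ℝ) * x + lam x) with hGdef
  set G' : ℝ → ℝ := fun x => s * ((a₂:ℝ) * deriv f x + (a₁:ℝ) + deriv lam x) with hG'def
  set G'' : ℝ → ℝ := fun x => s * ((a₂:ℝ) * deriv (deriv f) x + deriv (deriv lam) x) with hG''def
  have hG : ∀ x, HasDerivAt G (G' x) x := fun x => (hF'x x).const_mul s
  have hG'h : ∀ x, HasDerivAt G' (G'' x) x := fun x => (hF''x x).const_mul s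
  set m : ℝ := A * c₁ / 2 with hmdef
  set M : ℝ := 2 * A * c₂ with hMdef
  have hm : 0 < m := by rw [hmdef]; positivity
  have hbd : ∀ x ∈ Icc a b, m ≤ G'' x ∧ G'' x ≤ M := by
    intro x hx
    have h1 := hss x hx
    have h2 : |s * deriv (deriv lam) x| ≤ S := by
      rw [abs_mul, hs1, one_mul]; exact hS x hx
    obtain ⟨h2a, h2b⟩ := abs_le.mp h2
    have hexp : G'' x = s * ((a₂:ℝ) * deriv (deriv f) x) + s * deriv (deriv lam) x := by
      rw [hG''def]; ring
    constructor
    · rw [hexp, hmdef]; linarith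
    · have hu : s * ((a₂:ℝ) * deriv (deriv f) x) ≤ A * c₂ := by
        calc s * ((a₂:ℝ) * deriv (deriv f) x) ≤ |s * ((a₂:ℝ) * deriv (deriv f) x)| :=
              le_abs_self _
          _ = A * |deriv (deriv f) x| := by rw [abs_mul, hs1, one_mul, abs_mul]
          _ ≤ A * c₂ := mul_le_mul_of_nonneg_left (hbound x hx).2 (le_of_lt hA0)
      have hAc : A * c₁ ≤ A * c₂ := mul_le_mul_of_nonneg_left hc₁₂ (le_of_lt hA0)
      rw [hexp, hMdef]; linarith
  have hG'x₀ : G' x₀ = 0 := by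
    rw [hG'def]; simp only; rw [hdF0', mul_zero]
  set c : ℝ := -(s * (a₀:ℝ)) with hcdef
  set ρ : ℝ := D / 4 with hρdef
  have habsGc : ∀ x, |G x - c| = |((a₂:ℝ) * f x + (a₁:ℝ) * x + lam x) + (a₀:ℝ)| := by
    intro x
    have h : G x - c = s * (((a₂:ℝ) * f x + (a₁:ℝ) * x + lam x) + (a₀:ℝ)) := by
      rw [hGdef, hcdef]; ring
    rw [h, abs_mul, hs1, one_mul]
  have hfar : 2 * ρ ≤ |G x₀ - c| := by
    rw [habsGc x₀]
    set Fx₀ := (a₂:ℝ) * f x₀ + (a₁:ℝ) * x₀ + lam x₀ with hFx₀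
    have htri : D ≤ |Fx₀ + (a₀:ℝ)| + |Fx₀ + (a₀':ℝ)| := by
      have he : (a₀:ℝ) - (a₀':ℝ) = (Fx₀ + a₀) - (Fx₀ + a₀') := by ring
      rw [hDdef, he]
      exact abs_sub _ _
    have ha' : |Fx₀ + (a₀':ℝ)| ≤ 1/2 := ha₀'
    rw [hρdef]
    linarith
  have hmain := aux_convex a b G G' G'' hG hG'h m M hm hbd x₀ hx₀ hG'x₀ c ρ η
    (by rw [hρdef]; linarith) hηpos (by rw [hρdef]; linarith) hfar
  have hseteq : {x ∈ Icc a b | |((a₂:ℝ) * f x + (a₁:ℝ) * x + lam x) + (a₀:ℝ)| < η}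
      = {x ∈ Icc a b | |G x - c| < η} := by
    ext x
    simp only [mem_setOf_eq, habsGc x]
  -- final arithmetic
  set sA := Real.sqrt A with hsAdef
  set sD := Real.sqrt D with hsDdef
  have hsA0 : 0 < sA := Real.sqrt_pos.mpr hA0
  have hsD0 : 0 < sD := Real.sqrt_pos.mpr hD0
  have hsAA : sA * sA = A := Real.mul_self_sqrt (le_of_lt hA0)
  have hsDD : sD * sD = D := Real.mul_self_sqrt (le_of_lt hD0)
  have hscc : Real.sqrt c₂ * Real.sqrt c₂ = c₂ := Real.mul_self_sqrt (le_of_lt hc₂)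
  have h1 : 2 * ρ / M = D / (4 * A * c₂) := by
    rw [hρdef, hMdef]
    field_simp
  have h2 : Real.sqrt (2 * ρ / M) = sD / (2 * sA * Real.sqrt c₂) := by
    rw [h1, Real.sqrt_div (le_of_lt hD0)]
    congr 1
    have hsq : (2 * sA * Real.sqrt c₂)^2 = 4 * A * c₂ := by
      have he : (2 * sA * Real.sqrt c₂)^2 = 4 * (sA*sA) * (Real.sqrt c₂ * Real.sqrt c₂) := by
        ring
      rw [he, hsAA, hscc]
    rw [← hsq]
    exact Real.sqrt_sq (by positivity)
  have h3 : Real.sqrt (A * D) = sA * sD := Real.sqrt_mul (le_of_lt hA0) D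
  have harith : 8 * η / (m * Real.sqrt (2 * ρ / M)) =
      32 * Real.sqrt c₂ / c₁ * η / Real.sqrt (A * D) := by
    rw [h2, h3, hmdef, ← hsAA]
    field_simp
    ring
  calc volume {x ∈ Icc a b | |((a₂:ℝ) * f x + (a₁:ℝ) * x + lam x) + (a₀:ℝ)| < η}
      = volume {x ∈ Icc a b | |G x - c| < η} := by rw [hseteq]
    _ ≤ ENNReal.ofReal (8 * η / (m * Real.sqrt (2 * ρ / M))) := hmain
    _ = ENNReal.ofReal (32 * Real.sqrt c₂ / c₁ * η / Real.sqrt (A * D)) := by rw [harith]
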